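/- Let P be a walk in an undirected graph with positive edge weights that is the concatenation of two simple paths P_1 (from y to x) and P_2 (from x to z), where P_2 is a subpath of the reverse of P_1, together with an edge (z, y) ∈ E, and where the vertex after y on P_1 is different from z. Then P_1 together with edge (z, y) contains a simple cycle (on at least 3 vertices) of weight strictly less than w(P_1) + w(P_2) + w(z, y). -/

import Mathlib

def IsWalk {V : Type*} (E : V → V → Prop) : List V → Prop
  | [] => True
  | [_] => True
  | a :: b :: l => E a b ∧ IsWalk E (b :: l)

def IsWalkFrom {V : Type*} (E : V → V → Prop) (p : List V) (u x : V) : Prop :=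
  IsWalk E p ∧ p.head? = some u ∧ p.getLast? = some x

def wWeight {V α : Type*} [AddCommMonoid α] (w : V → V → α) : List V → α
  | a :: b :: l => w a b + wWeight w (b :: l)
  | _ => 0

def arcW {V α : Type*} [AddCommMonoid α] (w : V → V → α) (c : ℕ → V) (a k : ℕ) : α :=
  ∑ j ∈ Finset.range k, w (c (a + j)) (c (a + j + 1))

lemma walk_edge {V : Type*} {E : V → V → Prop} (d : V) :
    ∀ (p : List V), IsWalk E p → ∀ i, i + 1 < p.length →
      E (p.getD i d) (p.getD (i+1) d)
  | [], _, i, h => by simp at h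
  | [a], _, i, h => by simp at h
  | a :: b :: l, hw, 0, h => by simpa using hw.1
  | a :: b :: l, hw, (i+1), h => by
      have := walk_edge d (b :: l) hw.2 i (by simpa using h)
      simpa using this

lemma mem_zip_tail {V : Type*} (d : V) :
    ∀ (p : List V), ∀ i, i + 1 < p.length →
      (p.getD i d, p.getD (i+1) d) ∈ p.zip p.tail
  | [], i, h => by simp at h
  | [a], i, h => by simp at h
  | a :: b :: l, 0, h => by simp
  | a :: b :: l, (i+1), h => by
      have := mem_zip_tail d (b :: l) i (by simpa using h)
      simp only [List.zip_cons_cons, List.tail_cons] at this ⊢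
      exact List.mem_cons_of_mem _ this

lemma wWeight_eq_sum {V : Type*} (w : V → V → ℝ) (d : V) :
    ∀ (p : List V), wWeight w p =
      ∑ j ∈ Finset.range (p.length - 1), w (p.getD j d) (p.getD (j+1) d)
  | [] => by simp [wWeight]
  | [a] => by simp [wWeight]
  | a :: b :: l => by
      have IH := wWeight_eq_sum w d (b :: l)
      simp only [wWeight, List.length_cons]
      rw [show l.length + 1 + 1 - 1 = ((b::l).length - 1) + 1 by simp,
        Finset.sum_range_succ']
      simp only [List.getD_cons_succ, List.getD_cons_zero]
      simp only [List.getD_cons_succ] at IH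
      rw [IH]; ring

/-- `{a, b}` is an (undirected) edge of the path given by the vertex list `p`. -/
def edgeIn {V : Type*} (p : List V) (a b : V) : Prop :=
  (a, b) ∈ p.zip p.tail ∨ (b, a) ∈ p.zip p.tail

/-- in an undirected graph with positive edge weights, let `x, y, z` be
distinct, `P₁` a simple path from `y` to `x` whose second vertex `y'` satisfies
`y' ≠ z`, `P₂` a simple path from `x` to `z` which (as a vertex sequence) is a prefix
of the reverse of `P₁`, and `(z, y) ∈ E`. Then `P₁` together with the edge `(z, y)`
contains a simple cycle (on at least 3 vertices) of weight strictly less than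
`w(P₁) + w(P₂) + w(z, y)`. -/
theorem stmt16 {V : Type*} (E : V → V → Prop) (w : V → V → ℝ)
    (hEsym : ∀ a b, E a b → E b a) (hwsym : ∀ a b, w a b = w b a)
    (hwpos : ∀ a b, E a b → 0 < w a b)
    (x y z y' : V) (hxy : x ≠ y) (hxz : x ≠ z) (hyz : y ≠ z)
    (P1 P2 : List V)
    (hP1 : IsWalkFrom E P1 y x) (hP1nd : P1.Nodup)
    (hy' : P1[1]? = some y') (hy'z : y' ≠ z)
    (hP2 : IsWalkFrom E P2 x z) (hpre : P2 <+: P1.reverse)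
    (hzy : E z y) :
    ∃ (m : ℕ) (c : ℕ → V), 3 ≤ m ∧ (∀ j, c (j + m) = c j) ∧
      (∀ j, E (c j) (c (j + 1))) ∧ (∀ i j, i < m → j < m → c i = c j → i = j) ∧
      (∀ j, edgeIn P1 (c j) (c (j + 1)) ∨
        (c j = z ∧ c (j + 1) = y) ∨ (c j = y ∧ c (j + 1) = z)) ∧
      arcW w c 0 m < wWeight w P1 + wWeight w P2 + w z y := by
  classical
  obtain ⟨hw1, hh1, hl1⟩ := hP1
  obtain ⟨hw2, hh2, hl2⟩ := hP2
  have hP1ne : P1 ≠ [] := by rintro rfl; simp at hh1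
  obtain ⟨hlen1, hP1one⟩ := List.getElem?_eq_some_iff.mp hy'
  have h0 : P1.getD 0 z = y := by
    cases P1 with
    | nil => simp at hh1
    | cons a t => simp only [List.head?_cons, Option.some.injEq] at hh1; simp [hh1]
  have h1 : P1.getD 1 z = y' := by
    rw [List.getD_eq_getElem _ _ hlen1]; exact hP1one
  have hz2 : z ∈ P2 := by
    cases hP2e : P2.reverse with
    | nil => simp [List.reverse_eq_nil_iff.mp hP2e] at hl2
    | cons a t =>
      have hga : P2.getLast? = some a := by
        rw [List.getLast?_eq_head?_reverse, hP2e]; rfl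
      rw [hl2] at hga
      injection hga with h
      have : z ∈ P2.reverse := by rw [hP2e, h]; exact List.mem_cons_self
      exact List.mem_reverse.mp this
  have hzP1 : z ∈ P1 := List.mem_reverse.mp (hpre.subset hz2)
  set k := P1.idxOf z with hk
  have hklen : k < P1.length := List.idxOf_lt_length_iff.mpr hzP1
  have hPk : P1.getD k z = z := by
    rw [List.getD_eq_getElem _ _ hklen]; exact List.getElem_idxOf hklen
  have hk2 : 2 ≤ k := by
    by_contra h
    push_neg at h
    interval_cases k
    · rw [h0] at hPk; exact hyz hPk
    · rw [h1] at hPk; exact hy'z hPk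
  set m := k + 1 with hm
  have hmpos : 0 < m := by omega
  have hmlen : m ≤ P1.length := hklen
  have hstep : ∀ j, (j + 1) % m = (j % m + 1) % m := fun j => by
    rw [Nat.add_mod, Nat.one_mod_eq_one.mpr (by omega)]
  refine ⟨m, fun j => P1.getD (j % m) z, by omega, ?_, ?_, ?_, ?_, ?_⟩
  · intro j; simp [Nat.add_mod_right]
  · intro j
    by_cases hj : j % m = k
    · have h2 : (j + 1) % m = 0 := by
        rw [hstep j, hj, hm, Nat.mod_self]
      simp only [hj, h2, hPk, h0]; exact hzy
    · have hjk : j % m < k := by have := Nat.mod_lt j hmpos; omega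
      have h2 : (j + 1) % m = j % m + 1 := by
        rw [hstep j]; exact Nat.mod_eq_of_lt (by omega)
      simp only [h2]
      exact walk_edge z P1 hw1 (j % m) (by omega)
  · intro i j hi hj hij
    simp only [Nat.mod_eq_of_lt hi, Nat.mod_eq_of_lt hj] at hij
    rw [List.getD_eq_getElem _ _ (by omega : i < P1.length),
      List.getD_eq_getElem _ _ (by omega : j < P1.length)] at hij
    exact (hP1nd.getElem_inj_iff).mp hij
  · intro j
    by_cases hj : j % m = k
    · have h2 : (j + 1) % m = 0 := by
        rw [hstep j, hj, hm, Nat.mod_self]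
      simp only [hj, h2, hPk, h0]
      tauto
    · have hjk : j % m < k := by have := Nat.mod_lt j hmpos; omega
      have h2 : (j + 1) % m = j % m + 1 := by
        rw [hstep j]; exact Nat.mod_eq_of_lt (by omega)
      simp only [h2]
      exact Or.inl (Or.inl (mem_zip_tail z P1 (j % m) (by omega)))
  · have hsum : arcW w (fun j => P1.getD (j % m) z) 0 m =
        (∑ j ∈ Finset.range k, w (P1.getD j z) (P1.getD (j+1) z)) + w z y := by
      unfold arcW
      simp only [Nat.zero_add]
      rw [hm, Finset.sum_range_succ]
      congr 1
      · refine Finset.sum_congr rfl (fun j hj => ?_)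
        have hjk : j < k := Finset.mem_range.mp hj
        simp only [Nat.mod_eq_of_lt (show j < k + 1 by omega),
          Nat.mod_eq_of_lt (show j + 1 < k + 1 by omega)]
      · have h2 : (k + 1) % (k + 1) = 0 := Nat.mod_self _
        simp only [Nat.mod_eq_of_lt (show k < k + 1 by omega), h2, hPk, h0]
    rw [hsum, wWeight_eq_sum w z P1]
    have hle : (∑ j ∈ Finset.range k, w (P1.getD j z) (P1.getD (j+1) z)) ≤
        ∑ j ∈ Finset.range (P1.length - 1), w (P1.getD j z) (P1.getD (j+1) z) := by
      refine Finset.sum_le_sum_of_subset_of_nonneg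
        (Finset.range_subset_range.mpr (by omega)) (fun i hi _ => ?_)
      have hi' := Finset.mem_range.mp hi
      exact le_of_lt (hwpos _ _ (walk_edge z P1 hw1 i (by omega)))
    have hW2 : 0 < wWeight w P2 := by
      have hlen2 : 2 ≤ P2.length := by
        match hP2e : P2 with
        | [] => simp [hP2e] at hh2
        | [a] =>
          simp only [List.head?_cons, Option.some.injEq] at hh2
          simp only [List.getLast?_singleton, Option.some.injEq] at hl2
          exact absurd (hh2 ▸ hl2 ▸ rfl) hxz
        | a :: b :: t => simp
      rw [wWeight_eq_sum w z P2]
      refine Finset.sum_pos (fun i hi => ?_) ?_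
      · have hi' := Finset.mem_range.mp hi
        exact hwpos _ _ (walk_edge z P2 hw2 i (by omega))
      · exact ⟨0, Finset.mem_range.mpr (by omega)⟩
    linarith
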